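/- arXiv:2006.15134 — 7 statements merged into one kernel-verified Lean document; each statement's English description precedes it below -/
import Mathlib

section
/- Let μ be a probability distribution on a finite action set A, Q : A → ℝ, β > 0, and define π(a) = exp(Q(a)/β) μ(a) / Z with Z = Σ_a exp(Q(a)/β) μ(a). Then Σ_a π(a) Q(a) ≥ Σ_a μ(a) Q(a), with equality iff Q is constant on the support of μ. -/
open Finset

theorem crr_exp_value_improvement {A : Type*} [Fintype A]
    (μ : A → ℝ) (hμ0 : ∀ a, 0 ≤ μ a) (hμ1 : ∑ a, μ a = 1)
    (Q : A → ℝ) (β : ℝ) (hβ : 0 < β)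
    (Z : ℝ) (hZ : Z = ∑ a, Real.exp (Q a / β) * μ a)
    (π : A → ℝ)
    (hπ : ∀ a, π a = Real.exp (Q a / β) * μ a / Z) :
    (∑ a, π a * Q a ≥ ∑ a, μ a * Q a) ∧
      (∑ a, π a * Q a = ∑ a, μ a * Q a ↔
        ∀ a b, 0 < μ a → 0 < μ b → Q a = Q b) := by
  set e : A → ℝ := fun a => Real.exp (Q a / β) with he
  -- Z is positive
  have hZpos : 0 < Z := by
    obtain ⟨a, ha⟩ : ∃ a, 0 < μ a := by
      by_contra h
      push_neg at h
      have h0 : ∑ a, μ a = 0 :=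
        Finset.sum_eq_zero fun a _ => le_antisymm (h a) (hμ0 a)
      rw [h0] at hμ1; norm_num at hμ1
    rw [hZ]
    exact Finset.sum_pos' (fun b _ => mul_nonneg (Real.exp_pos _).le (hμ0 b))
      ⟨a, Finset.mem_univ a, mul_pos (Real.exp_pos _) ha⟩
  -- monotone factor
  have hmono : ∀ a b, 0 ≤ (e a - e b) * (Q a - Q b) := by
    intro a b
    rcases lt_trichotomy (Q a) (Q b) with h | h | h
    · have : e a < e b := Real.exp_lt_exp.2 (by exact div_lt_div_of_pos_right h hβ)
      exact le_of_lt (mul_pos_of_neg_of_neg (by linarith) (by linarith))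
    · simp [h]
    · have : e b < e a := Real.exp_lt_exp.2 (by exact div_lt_div_of_pos_right h hβ)
      exact le_of_lt (mul_pos (by linarith) (by linarith))
  have hterm : ∀ a b, 0 ≤ μ a * μ b * ((e a - e b) * (Q a - Q b)) :=
    fun a b => mul_nonneg (mul_nonneg (hμ0 a) (hμ0 b)) (hmono a b)
  -- key identity
  have hπsum : ∑ a, π a * Q a = (∑ a, μ a * e a * Q a) / Z := by
    rw [Finset.sum_div]
    refine Finset.sum_congr rfl fun a _ => ?_
    rw [hπ a]; ring
  have hZ' : Z = ∑ a, μ a * e a := by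
    rw [hZ]; exact Finset.sum_congr rfl fun a _ => by ring
  have hkey : ∑ a, ∑ b, μ a * μ b * ((e a - e b) * (Q a - Q b))
      = 2 * Z * (∑ a, π a * Q a - ∑ a, μ a * Q a) := by
    have hswap : ∑ a, ∑ b, μ a * μ b * (e b * Q b - e b * Q a)
        = ∑ a, ∑ b, μ a * μ b * (e a * Q a - e a * Q b) := by
      rw [Finset.sum_comm]
      exact Finset.sum_congr rfl fun a _ => Finset.sum_congr rfl fun b _ => by ring
    have hsym : ∑ a, ∑ b, μ a * μ b * ((e a - e b) * (Q a - Q b))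
        = 2 * ∑ a, ∑ b, μ a * μ b * (e a * Q a - e a * Q b) := by
      have : ∑ a, ∑ b, μ a * μ b * ((e a - e b) * (Q a - Q b))
          = ∑ a, ∑ b, (μ a * μ b * (e a * Q a - e a * Q b)
              + μ a * μ b * (e b * Q b - e b * Q a)) :=
        Finset.sum_congr rfl fun a _ => Finset.sum_congr rfl fun b _ => by ring
      rw [this]
      simp only [Finset.sum_add_distrib]
      rw [hswap]; ring
    have expand : ∑ a, ∑ b, μ a * μ b * (e a * Q a - e a * Q b)
        = (∑ a, μ a * e a * Q a) * (∑ a, μ a)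
          - (∑ a, μ a * e a) * (∑ a, μ a * Q a) := by
      rw [Finset.sum_mul_sum, Finset.sum_mul_sum, ← Finset.sum_sub_distrib]
      refine Finset.sum_congr rfl fun a _ => ?_
      rw [← Finset.sum_sub_distrib]
      exact Finset.sum_congr rfl fun b _ => by ring
    rw [hsym, expand, hπsum, hμ1, ← hZ']
    field_simp
  have hge : ∑ a, π a * Q a ≥ ∑ a, μ a * Q a := by
    have h0 : 0 ≤ ∑ a, ∑ b, μ a * μ b * ((e a - e b) * (Q a - Q b)) :=
      Finset.sum_nonneg fun a _ => Finset.sum_nonneg fun b _ => hterm a b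
    rw [hkey] at h0
    nlinarith
  refine ⟨hge, ?_, ?_⟩
  · intro heq a b ha hb
    have hD : ∑ a, ∑ b, μ a * μ b * ((e a - e b) * (Q a - Q b)) = 0 := by
      rw [hkey, heq]; ring
    have hab : μ a * μ b * ((e a - e b) * (Q a - Q b)) = 0 := by
      have h1 := (Finset.sum_eq_zero_iff_of_nonneg
        (fun a _ => Finset.sum_nonneg fun b _ => hterm a b)).1 hD a (Finset.mem_univ a)
      have h2 := (Finset.sum_eq_zero_iff_of_nonneg
        (fun b _ => hterm a b)).1 h1 b (Finset.mem_univ b)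
      exact h2
    by_contra hne
    have hpos : 0 < (e a - e b) * (Q a - Q b) := by
      rcases lt_or_gt_of_ne hne with h | h
      · have : e a < e b := Real.exp_lt_exp.2 (div_lt_div_of_pos_right h hβ)
        exact mul_pos_of_neg_of_neg (by linarith) (by linarith)
      · have : e b < e a := Real.exp_lt_exp.2 (div_lt_div_of_pos_right h hβ)
        exact mul_pos (by linarith) (by linarith)
    have : 0 < μ a * μ b * ((e a - e b) * (Q a - Q b)) :=
      mul_pos (mul_pos ha hb) hpos
    linarith [hab]
  · intro hconst
    have hD : ∑ a, ∑ b, μ a * μ b * ((e a - e b) * (Q a - Q b)) = 0 := by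
      refine Finset.sum_eq_zero fun a _ => Finset.sum_eq_zero fun b _ => ?_
      rcases (hμ0 a).eq_or_lt with ha | ha
      · rw [← ha]; ring
      rcases (hμ0 b).eq_or_lt with hb | hb
      · rw [← hb]; ring
      rw [hconst a b ha hb]; ring
    rw [hD] at hkey
    have : ∑ a, π a * Q a - ∑ a, μ a * Q a = 0 := by
      have := hkey.symm
      rcases mul_eq_zero.1 this with h | h
      · exfalso; nlinarith
      · exact h
    linarith
end

section
/- Let M be a finite discounted MDP with discount γ ∈ [0,1) and policy π. For each state s, let V = V^π(s) and suppose the set {a : Q^π(s,a) ≥ V^π(s)} has positive probability under π(·|s). Define π'(a|s) = 𝟙[Q^π(s,a) ≥ V^π(s)] π(a|s) / Z(s). Then V^{π'}(s) ≥ V^π(s) for all s, and Q^{π'}(s,a) ≥ Q^π(s,a) for all (s,a). -/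
open Finset

/-- Tabular CRR binary policy improvement. -/
theorem crr_binary_policy_improvement {S A : Type*} [Fintype S] [Fintype A]
    (P : S → A → S → ℝ) (hP0 : ∀ s a s', 0 ≤ P s a s') (hP1 : ∀ s a, ∑ s', P s a s' = 1)
    (r : S → A → ℝ) (γ : ℝ) (hγ0 : 0 ≤ γ) (hγ1 : γ < 1)
    (π : S → A → ℝ) (hπ0 : ∀ s a, 0 ≤ π s a) (hπ1 : ∀ s, ∑ a, π s a = 1)
    (Qπ : S → A → ℝ) (V : S → ℝ)
    (hV : ∀ s, V s = ∑ a, π s a * Qπ s a)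
    (hBellπ : ∀ s a, Qπ s a = r s a + γ * ∑ s', P s a s' * V s')
    (Z : S → ℝ) (hZ : ∀ s, Z s = ∑ a, (if V s ≤ Qπ s a then (1 : ℝ) else 0) * π s a)
    (hZpos : ∀ s, 0 < Z s)
    (π' : S → A → ℝ)
    (hπ' : ∀ s a, π' s a = (if V s ≤ Qπ s a then (1 : ℝ) else 0) * π s a / Z s)
    (Qπ' : S → A → ℝ) (V' : S → ℝ)
    (hV' : ∀ s, V' s = ∑ a, π' s a * Qπ' s a)
    (hBellπ' : ∀ s a, Qπ' s a = r s a + γ * ∑ s', P s a s' * V' s') :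
    (∀ s, V' s ≥ V s) ∧ (∀ s a, Qπ' s a ≥ Qπ s a) := by
  by_cases hS : Nonempty S
  · -- π' nonneg
    have hπ'0 : ∀ s a, 0 ≤ π' s a := by
      intro s a
      rw [hπ' s a]
      apply div_nonneg _ (hZpos s).le
      by_cases h : V s ≤ Qπ s a <;> simp [h, hπ0]
    -- π' sums to 1
    have hπ'1 : ∀ s, ∑ a, π' s a = 1 := by
      intro s
      have : ∑ a, π' s a = (∑ a, (if V s ≤ Qπ s a then (1 : ℝ) else 0) * π s a) / Z s := by
        rw [Finset.sum_div]; exact Finset.sum_congr rfl fun a _ => hπ' s a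
      rw [this, ← hZ s, div_self (hZpos s).ne']
    -- π' supported where Qπ ≥ V
    have hsupp : ∀ s a, π' s a * V s ≤ π' s a * Qπ s a := by
      intro s a
      by_cases h : V s ≤ Qπ s a
      · exact mul_le_mul_of_nonneg_left h (hπ'0 s a)
      · rw [hπ' s a]; simp [h]
    -- key2 : V s ≤ ∑ π' Qπ
    have key2 : ∀ s, V s ≤ ∑ a, π' s a * Qπ s a := by
      intro s
      calc V s = ∑ a, π' s a * V s := by
            rw [← Finset.sum_mul, hπ'1 s, one_mul]
        _ ≤ ∑ a, π' s a * Qπ s a := Finset.sum_le_sum fun a _ => hsupp s a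
    obtain ⟨s₀, _, hmin⟩ := Finset.exists_min_image Finset.univ
      (fun s => V' s - V s) (Finset.univ_nonempty)
    set m := V' s₀ - V s₀ with hm
    have hminall : ∀ s, m ≤ V' s - V s := fun s => hmin s (Finset.mem_univ s)
    -- key1 : γ * m ≤ Qπ' - Qπ
    have key1 : ∀ s a, γ * m ≤ Qπ' s a - Qπ s a := by
      intro s a
      have h1 : Qπ' s a - Qπ s a = γ * ∑ s', P s a s' * (V' s' - V s') := by
        rw [hBellπ' s a, hBellπ s a,
          show (∑ s', P s a s' * (V' s' - V s'))
            = (∑ s', P s a s' * V' s') - ∑ s', P s a s' * V s' by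
            rw [← Finset.sum_sub_distrib]
            exact Finset.sum_congr rfl fun s' _ => by ring]
        ring
      rw [h1]
      apply mul_le_mul_of_nonneg_left _ hγ0
      calc m = ∑ s', P s a s' * m := by rw [← Finset.sum_mul, hP1 s a, one_mul]
        _ ≤ ∑ s', P s a s' * (V' s' - V s') :=
            Finset.sum_le_sum fun s' _ =>
              mul_le_mul_of_nonneg_left (hminall s') (hP0 s a s')
    -- key3 : γ * m ≤ V' s - V s
    have key3 : ∀ s, γ * m ≤ V' s - V s := by
      intro s
      have h1 : γ * m ≤ ∑ a, π' s a * (Qπ' s a - Qπ s a) := by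
        calc γ * m = ∑ a, π' s a * (γ * m) := by
              rw [← Finset.sum_mul, hπ'1 s, one_mul]
          _ ≤ _ := Finset.sum_le_sum fun a _ =>
              mul_le_mul_of_nonneg_left (key1 s a) (hπ'0 s a)
      have h2 : ∑ a, π' s a * (Qπ' s a - Qπ s a)
          = V' s - ∑ a, π' s a * Qπ s a := by
        rw [hV' s, ← Finset.sum_sub_distrib]
        exact Finset.sum_congr rfl fun a _ => by ring
      have := key2 s
      linarith [h1, h2 ▸ h1]
    have hm0 : 0 ≤ m := by
      have := key3 s₀
      nlinarith
    constructor
    · intro s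
      have := key3 s
      nlinarith [mul_nonneg hγ0 hm0]
    · intro s a
      have := key1 s a
      nlinarith [mul_nonneg hγ0 hm0]
  · exact ⟨fun s => absurd ⟨s⟩ hS, fun s _ => absurd ⟨s⟩ hS⟩
end

section
/- Let M be a finite discounted MDP with γ ∈ [0,1), π a policy, and β > 0. Define π'(a|s) = exp(Q^π(s,a)/β) π(a|s) / Z(s) with Z(s) the per-state normalizer. Then Q^{π'}(s,a) ≥ Q^π(s,a) for all (s,a). -/
open Finset

lemma cheb_aux {A : Type*} [Fintype A] (w f g : A → ℝ) (hw : ∀ a, 0 ≤ w a)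
    (hm : ∀ a b, 0 ≤ (f a - f b) * (g a - g b)) :
    (∑ a, w a * f a) * (∑ a, w a * g a) ≤ (∑ a, w a) * (∑ a, w a * (f a * g a)) := by
  have h0 : 0 ≤ ∑ a : A, ∑ b : A, w a * w b * ((f a - f b) * (g a - g b)) := by
    refine sum_nonneg fun a _ => sum_nonneg fun b _ => ?_
    exact mul_nonneg (mul_nonneg (hw a) (hw b)) (hm a b)
  have hexp : ∑ a : A, ∑ b : A, w a * w b * ((f a - f b) * (g a - g b)) =
      2 * ((∑ a, w a) * (∑ a, w a * (f a * g a)) - (∑ a, w a * f a) * (∑ a, w a * g a)) := by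
    have e : ∀ a b : A, w a * w b * ((f a - f b) * (g a - g b)) =
        w a * (w b * (f b * g b)) + w b * (w a * (f a * g a))
        - (w a * f a) * (w b * g b) - (w b * f b) * (w a * g a) := by
      intro a b; ring
    simp_rw [e, Finset.sum_sub_distrib, Finset.sum_add_distrib, ← Finset.mul_sum,
      ← Finset.sum_mul]
    simp only [mul_assoc, ← Finset.mul_sum]
    ring
  linarith

/-- Tabular CRR exp policy improvement. -/
theorem crr_exp_policy_improvement {S A : Type*} [Fintype S] [Fintype A]
    (P : S → A → S → ℝ) (hP0 : ∀ s a s', 0 ≤ P s a s') (hP1 : ∀ s a, ∑ s', P s a s' = 1)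
    (r : S → A → ℝ) (γ : ℝ) (hγ0 : 0 ≤ γ) (hγ1 : γ < 1)
    (β : ℝ) (hβ : 0 < β)
    (π : S → A → ℝ) (hπ0 : ∀ s a, 0 ≤ π s a) (hπ1 : ∀ s, ∑ a, π s a = 1)
    (Qπ : S → A → ℝ)
    (hBellπ : ∀ s a, Qπ s a = r s a + γ * ∑ s', P s a s' * ∑ a', π s' a' * Qπ s' a')
    (Z : S → ℝ) (hZ : ∀ s, Z s = ∑ a, Real.exp (Qπ s a / β) * π s a)
    (π' : S → A → ℝ)
    (hπ' : ∀ s a, π' s a = Real.exp (Qπ s a / β) * π s a / Z s)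
    (Qπ' : S → A → ℝ)
    (hBellπ' : ∀ s a, Qπ' s a = r s a + γ * ∑ s', P s a s' * ∑ a', π' s' a' * Qπ' s' a') :
    ∀ s a, Qπ' s a ≥ Qπ s a := by
  have hZpos : ∀ s, 0 < Z s := by
    intro s
    rw [hZ s]
    have hex : ∃ a : A, 0 < π s a := by
      by_contra h
      push_neg at h
      have : (∑ a, π s a) ≤ 0 := sum_nonpos fun a _ => h a
      linarith [hπ1 s]
    obtain ⟨a0, ha0⟩ := hex
    refine sum_pos' (fun a _ => mul_nonneg (Real.exp_pos _).le (hπ0 s a)) ⟨a0, mem_univ _, ?_⟩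
    exact mul_pos (Real.exp_pos _) ha0
  have hπ'0 : ∀ s a, 0 ≤ π' s a := fun s a => by
    rw [hπ' s a]
    exact div_nonneg (mul_nonneg (Real.exp_pos _).le (hπ0 s a)) (hZpos s).le
  have hπ'1 : ∀ s, ∑ a, π' s a = 1 := by
    intro s
    simp_rw [hπ' s, ← Finset.sum_div, ← hZ s]
    exact div_self (hZpos s).ne'
  -- single-state improvement
  have hstep : ∀ s, ∑ a, π s a * Qπ s a ≤ ∑ a, π' s a * Qπ s a := by
    intro s
    have hch := cheb_aux (π s) (fun a => Real.exp (Qπ s a / β)) (Qπ s) (hπ0 s)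
      (fun a b => by
        rcases le_total (Qπ s a) (Qπ s b) with h | h
        · have h1 : Real.exp (Qπ s a / β) ≤ Real.exp (Qπ s b / β) :=
            Real.exp_le_exp.2 ((div_le_div_iff_of_pos_right hβ).2 h)
          nlinarith
        · have h1 : Real.exp (Qπ s b / β) ≤ Real.exp (Qπ s a / β) :=
            Real.exp_le_exp.2 ((div_le_div_iff_of_pos_right hβ).2 h)
          nlinarith)
    have hZ' : ∑ a, π s a * Real.exp (Qπ s a / β) = Z s := by
      rw [hZ s]; exact Finset.sum_congr rfl fun a _ => mul_comm _ _
    have h1 : ∑ a, π' s a * Qπ s a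
        = (∑ a, π s a * (Real.exp (Qπ s a / β) * Qπ s a)) / Z s := by
      simp_rw [hπ', div_mul_eq_mul_div, ← Finset.sum_div]
      congr 1
      exact Finset.sum_congr rfl fun a _ => by ring
    rw [h1, le_div_iff₀ (hZpos s)]
    rw [hπ1 s, one_mul] at hch
    rw [hZ'] at hch
    calc (∑ a, π s a * Qπ s a) * Z s = Z s * ∑ a, π s a * Qπ s a := mul_comm _ _
      _ ≤ ∑ a, π s a * (Real.exp (Qπ s a / β) * Qπ s a) := by
          have := hch
          linarith [hch]
  -- Bellman difference
  have hD : ∀ s a, Qπ' s a - Qπ s a =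
      γ * ∑ s', P s a s' *
        ((∑ a', π' s' a' * Qπ' s' a') - (∑ a', π s' a' * Qπ s' a')) := by
    intro s a
    rw [hBellπ' s a, hBellπ s a]
    simp_rw [mul_sub, Finset.sum_sub_distrib]
    ring
  intro s a
  obtain ⟨p0, -, hmin⟩ := Finset.exists_min_image (univ : Finset (S × A))
    (fun p => Qπ' p.1 p.2 - Qπ p.1 p.2) ⟨(s, a), mem_univ _⟩
  set m := Qπ' p0.1 p0.2 - Qπ p0.1 p0.2 with hm
  have hmin' : ∀ s' a', m ≤ Qπ' s' a' - Qπ s' a' := fun s' a' =>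
    hmin (s', a') (mem_univ _)
  -- per-state bound
  have hst : ∀ s', m ≤ (∑ a', π' s' a' * Qπ' s' a') - (∑ a', π s' a' * Qπ s' a') := by
    intro s'
    have h2 : (∑ a', π' s' a' * Qπ' s' a') - (∑ a', π' s' a' * Qπ s' a')
        = ∑ a', π' s' a' * (Qπ' s' a' - Qπ s' a') := by
      rw [← Finset.sum_sub_distrib]
      exact Finset.sum_congr rfl fun a' _ => by ring
    have h3 : m ≤ ∑ a', π' s' a' * (Qπ' s' a' - Qπ s' a') := by
      calc m = ∑ a', π' s' a' * m := by rw [← Finset.sum_mul, hπ'1 s', one_mul]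
        _ ≤ _ := Finset.sum_le_sum fun a' _ =>
            mul_le_mul_of_nonneg_left (hmin' s' a') (hπ'0 s' a')
    have h4 := hstep s'
    linarith [h2 ▸ h3]
  have hmain : m ≥ γ * m := by
    have h5 : γ * m ≤ γ * ∑ s', P p0.1 p0.2 s' *
        ((∑ a', π' s' a' * Qπ' s' a') - (∑ a', π s' a' * Qπ s' a')) := by
      refine mul_le_mul_of_nonneg_left ?_ hγ0
      calc m = ∑ s', P p0.1 p0.2 s' * m := by rw [← Finset.sum_mul, hP1, one_mul]
        _ ≤ _ := Finset.sum_le_sum fun s' _ =>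
            mul_le_mul_of_nonneg_left (hst s') (hP0 _ _ _)
    have h6 := hD p0.1 p0.2
    rw [← hm] at h6
    linarith
  have hm0 : 0 ≤ m := by nlinarith
  linarith [hmin' s a]
end

section
/- In a two-armed bandit where arm 1 yields reward 0 or 1 each with probability 1/2 (mean 1/2) and arm 2 yields deterministic reward 0.9, let the behavior policy be μ(arm1) = 2/3, μ(arm2) = 1/3. Let V = Σ_a μ(a)·E[R|a] be the behavior value. For any temperature β > 0, the return-weighted policy π(a) ∝ E_{R∼a}[exp((R − V)/β)]·μ(a) satisfies π(arm1) > π(arm2), even though arm 2 has strictly higher expected reward. -/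
/-- In the two-armed bandit (arm 1: Bernoulli(1/2) reward in {0,1};
arm 2: deterministic 0.9; behavior μ = (2/3, 1/3); V = 0.6), return-based
exponential advantage weighting favors the inferior arm 1 for every β > 0. -/
theorem return_weighting_favors_inferior_arm
    (β : ℝ) (hβ : 0 < β)
    (V : ℝ) (hV : V = (2/3 : ℝ) * (1/2) + (1/3 : ℝ) * (0.9 : ℝ))
    (w₁ w₂ : ℝ)
    (hw₁ : w₁ = (1/2 : ℝ) * (Real.exp ((0 - V) / β) + Real.exp ((1 - V) / β)))
    (hw₂ : w₂ = Real.exp (((0.9 : ℝ) - V) / β))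
    (Z : ℝ) (hZ : Z = (2/3 : ℝ) * w₁ + (1/3 : ℝ) * w₂)
    (π₁ π₂ : ℝ) (hπ₁ : π₁ = (2/3 : ℝ) * w₁ / Z) (hπ₂ : π₂ = (1/3 : ℝ) * w₂ / Z) :
    π₁ > π₂ ∧ (0.9 : ℝ) > (1/2 : ℝ) := by
  have harg : ((0.9 : ℝ) - V) / β < (1 - V) / β := by
    apply div_lt_div_of_pos_right _ hβ
    linarith
  have h1 : w₂ < Real.exp ((1 - V) / β) := by
    rw [hw₂]; exact Real.exp_lt_exp.2 harg
  have h0 : 0 < Real.exp ((0 - V) / β) := Real.exp_pos _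
  have hkey : (1/3 : ℝ) * w₂ < (2/3 : ℝ) * w₁ := by
    rw [hw₁]; nlinarith [Real.exp_pos ((1 - V) / β), hw₂ ▸ Real.exp_pos (((0.9:ℝ) - V) / β)]
  have hw₂pos : 0 < w₂ := hw₂ ▸ Real.exp_pos _
  have hZpos : 0 < Z := by rw [hZ]; nlinarith
  refine ⟨?_, by norm_num⟩
  rw [hπ₁, hπ₂]
  exact div_lt_div_of_pos_right hkey hZpos
end

section
/- Let π be a policy on a finite MDP and π̄ the CWP policy π̄(a|s) = exp(Q^π(s,a)/β) π(a|s) / Z(s). Then for every state s, Σ_a π̄(a|s) Q^π(s,a) ≥ V^π(s), i.e., one-step CWP reweighting at execution time does not decrease the expected Q-value under the current critic. -/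
open Finset

/-- One-step CWP reweighting does not decrease the expected Q-value under the
current critic, at every state. -/
theorem cwp_one_step_improvement {S A : Type*} [Fintype A]
    (π : S → A → ℝ) (hπ0 : ∀ s a, 0 ≤ π s a) (hπ1 : ∀ s, ∑ a, π s a = 1)
    (Q : S → A → ℝ) (β : ℝ) (hβ : 0 < β)
    (V : S → ℝ) (hV : ∀ s, V s = ∑ a, π s a * Q s a)
    (Z : S → ℝ) (hZ : ∀ s, Z s = ∑ a, Real.exp (Q s a / β) * π s a)
    (πbar : S → A → ℝ)
    (hπbar : ∀ s a, πbar s a = Real.exp (Q s a / β) * π s a / Z s) :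
    ∀ s, ∑ a, πbar s a * Q s a ≥ V s := by
  intro s
  set w : A → ℝ := π s with hw
  set q : A → ℝ := Q s with hq
  set e : A → ℝ := fun a => Real.exp (q a / β) with he
  have hZpos : 0 < Z s := by
    rw [hZ]
    have hex : ∃ a : A, 0 < w a := by
      by_contra h
      push_neg at h
      have : ∑ a, w a = 0 := Finset.sum_eq_zero fun a _ => le_antisymm (h a) (hπ0 s a)
      rw [hπ1 s] at this; norm_num at this
    obtain ⟨a0, ha0⟩ := hex
    refine Finset.sum_pos' (fun a _ => mul_nonneg (Real.exp_pos _).le (hπ0 s a)) ⟨a0, Finset.mem_univ a0, ?_⟩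
    exact mul_pos (Real.exp_pos _) ha0
  have key : 0 ≤ ∑ a, ∑ b, w a * w b * ((q a - q b) * (e a - e b)) := by
    refine Finset.sum_nonneg fun a _ => Finset.sum_nonneg fun b _ => ?_
    refine mul_nonneg (mul_nonneg (hπ0 s a) (hπ0 s b)) ?_
    rcases le_total (q a) (q b) with h | h
    · have hee : e a ≤ e b := Real.exp_le_exp.2 (by exact div_le_div_of_nonneg_right h hβ.le)
      nlinarith
    · have hee : e b ≤ e a := Real.exp_le_exp.2 (by exact div_le_div_of_nonneg_right h hβ.le)
      exact mul_nonneg (by linarith) (by linarith)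
  have expand : ∑ a, ∑ b, w a * w b * ((q a - q b) * (e a - e b))
      = 2 * (∑ a, w a * (q a * e a)) - 2 * ((∑ a, w a * q a) * (∑ a, w a * e a)) := by
    have h1 : ∀ a b : A, w a * w b * ((q a - q b) * (e a - e b))
        = (w a * (q a * e a)) * w b + w a * (w b * (q b * e b))
          - (w a * q a) * (w b * e b) - (w a * e a) * (w b * q b) := by
      intros; ring
    simp only [h1, Finset.sum_sub_distrib, Finset.sum_add_distrib,
      ← Finset.mul_sum, ← Finset.sum_mul]
    rw [hπ1 s]
    ring
  have key2 : (∑ a, w a * q a) * (∑ a, w a * e a) ≤ ∑ a, w a * (q a * e a) := by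
    rw [expand] at key; linarith
  have hVs : V s = ∑ a, w a * q a := hV s
  rw [ge_iff_le, hVs]
  have : ∑ a, πbar s a * q a = (∑ a, w a * (q a * e a)) / Z s := by
    rw [Finset.sum_div]
    refine Finset.sum_congr rfl fun a _ => ?_
    rw [hπbar s a]; field_simp; ring
  rw [this, le_div_iff₀ hZpos]
  have hZe : Z s = ∑ a, w a * e a := by
    rw [hZ]; exact Finset.sum_congr rfl fun a _ => by ring
  rw [hZe]; exact key2
end

section
/- Let P and P' be transition kernels on a finite MDP sharing reward r bounded by |r| ≤ R_max(1−γ), and let Q and Q' be the action-value functions of a fixed policy π under P and P' respectively. Then sup_{s,a} |Q(s,a) − Q'(s,a)| ≤ (R_max/(1−γ)) · sup_{s,a} Σ_{s'} |P(s'|s,a) − P'(s'|s,a)|. -/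
open Finset

/-- The gap between Q-functions of the same policy under two transition kernels
is controlled by the total-variation distance between the kernels. -/
theorem q_gap_bounded_by_kernel_tv {S A : Type*} [Fintype S] [Fintype A]
    [Nonempty S] [Nonempty A]
    (P P' : S → A → S → ℝ)
    (hP0 : ∀ s a s', 0 ≤ P s a s') (hP1 : ∀ s a, ∑ s', P s a s' = 1)
    (hP'0 : ∀ s a s', 0 ≤ P' s a s') (hP'1 : ∀ s a, ∑ s', P' s a s' = 1)
    (r : S → A → ℝ) (γ : ℝ) (hγ0 : 0 ≤ γ) (hγ1 : γ < 1)
    (Rmax : ℝ) (hr : ∀ s a, |r s a| ≤ Rmax * (1 - γ))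
    (π : S → A → ℝ) (hπ0 : ∀ s a, 0 ≤ π s a) (hπ1 : ∀ s, ∑ a, π s a = 1)
    (Q Q' : S → A → ℝ)
    (hBell : ∀ s a, Q s a = r s a + γ * ∑ s', P s a s' * ∑ a', π s' a' * Q s' a')
    (hBell' : ∀ s a, Q' s a = r s a + γ * ∑ s', P' s a s' * ∑ a', π s' a' * Q' s' a') :
    (⨆ p : S × A, |Q p.1 p.2 - Q' p.1 p.2|) ≤
      Rmax / (1 - γ) * ⨆ p : S × A, ∑ s', |P p.1 p.2 s' - P' p.1 p.2 s'| := by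
  classical
  set V : S → ℝ := fun s => ∑ a, π s a * Q s a with hVdef
  set V' : S → ℝ := fun s => ∑ a, π s a * Q' s a with hV'def
  have hBellV : ∀ s a, Q s a = r s a + γ * ∑ s', P s a s' * V s' := fun s a => hBell s a
  have hBell'V : ∀ s a, Q' s a = r s a + γ * ∑ s', P' s a s' * V' s' := fun s a => hBell' s a
  have h1γ : 0 < 1 - γ := by linarith
  have hRmax : 0 ≤ Rmax := by
    have h := hr (Classical.arbitrary S) (Classical.arbitrary A)
    nlinarith [abs_nonneg (r (Classical.arbitrary S) (Classical.arbitrary A))]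
  -- bound |Q'| ≤ Rmax
  obtain ⟨q, hq⟩ := Finite.exists_max (fun p : S × A => |Q' p.1 p.2|)
  have hVbd : ∀ s', |V' s'| ≤ |Q' q.1 q.2| := by
    intro s'
    calc |V' s'| ≤ ∑ a', |π s' a' * Q' s' a'| := Finset.abs_sum_le_sum_abs _ _
      _ ≤ ∑ a', π s' a' * |Q' q.1 q.2| := by
          apply Finset.sum_le_sum; intro a' _
          rw [abs_mul, abs_of_nonneg (hπ0 _ _)]
          exact mul_le_mul_of_nonneg_left (hq (s', a')) (hπ0 _ _)
      _ = |Q' q.1 q.2| := by rw [← Finset.sum_mul, hπ1, one_mul]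
  have hM : |Q' q.1 q.2| ≤ Rmax := by
    have hb := hBell'V q.1 q.2
    have h2 : |Q' q.1 q.2| ≤ Rmax * (1 - γ) + γ * |Q' q.1 q.2| := by
      calc |Q' q.1 q.2| = |r q.1 q.2 + γ * ∑ s', P' q.1 q.2 s' * V' s'| :=
            congrArg (fun x => |x|) hb
        _
          ≤ |r q.1 q.2| + γ * |∑ s', P' q.1 q.2 s' * V' s'| := by
            refine (abs_add_le _ _).trans ?_
            rw [abs_mul, abs_of_nonneg hγ0]
        _ ≤ Rmax * (1 - γ) + γ * |Q' q.1 q.2| := by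
            refine add_le_add (hr _ _) (mul_le_mul_of_nonneg_left ?_ hγ0)
            calc |∑ s', P' q.1 q.2 s' * V' s'| ≤ ∑ s', |P' q.1 q.2 s' * V' s'| :=
                  Finset.abs_sum_le_sum_abs _ _
              _ ≤ ∑ s', P' q.1 q.2 s' * |Q' q.1 q.2| := by
                  apply Finset.sum_le_sum; intro s' _
                  rw [abs_mul, abs_of_nonneg (hP'0 _ _ _)]
                  exact mul_le_mul_of_nonneg_left (hVbd s') (hP'0 _ _ _)
              _ = |Q' q.1 q.2| := by rw [← Finset.sum_mul, hP'1, one_mul]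
    nlinarith
  have hQ'bd : ∀ s a, |Q' s a| ≤ Rmax := fun s a => (hq (s, a)).trans hM
  -- maximizer of the gap
  obtain ⟨p₀, hp₀⟩ := Finite.exists_max (fun p : S × A => |Q p.1 p.2 - Q' p.1 p.2|)
  set ε : ℝ := |Q p₀.1 p₀.2 - Q' p₀.1 p₀.2| with hεdef
  have hε0 : 0 ≤ ε := abs_nonneg _
  set D : ℝ := ⨆ p : S × A, ∑ s', |P p.1 p.2 s' - P' p.1 p.2 s'| with hDdef
  have hbdd : BddAbove (Set.range fun p : S × A => ∑ s', |P p.1 p.2 s' - P' p.1 p.2 s'|) :=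
    Finite.bddAbove_range _
  have hTVle : ∀ p : S × A, (∑ s', |P p.1 p.2 s' - P' p.1 p.2 s'|) ≤ D :=
    fun p => le_ciSup hbdd p
  have hD0 : 0 ≤ D :=
    le_trans (Finset.sum_nonneg fun _ _ => abs_nonneg _) (hTVle (Classical.arbitrary _))
  -- error propagation identity
  have key : Q p₀.1 p₀.2 - Q' p₀.1 p₀.2 =
      γ * ((∑ s', (P p₀.1 p₀.2 s' - P' p₀.1 p₀.2 s') * V' s') +
        ∑ s', P p₀.1 p₀.2 s' * (V s' - V' s')) := by
    rw [hBellV p₀.1 p₀.2, hBell'V p₀.1 p₀.2]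
    have h : (∑ s', (P p₀.1 p₀.2 s' - P' p₀.1 p₀.2 s') * V' s') +
        ∑ s', P p₀.1 p₀.2 s' * (V s' - V' s') =
        (∑ s', P p₀.1 p₀.2 s' * V s') - ∑ s', P' p₀.1 p₀.2 s' * V' s' := by
      rw [← Finset.sum_add_distrib, ← Finset.sum_sub_distrib]
      apply Finset.sum_congr rfl; intros; ring
    rw [h]; ring
  have hVgap : ∀ s', |V s' - V' s'| ≤ ε := by
    intro s'
    calc |V s' - V' s'| = |∑ a', π s' a' * (Q s' a' - Q' s' a')| := by
          rw [hVdef, hV'def]; congr 1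
          rw [← Finset.sum_sub_distrib]
          apply Finset.sum_congr rfl; intros; ring
      _ ≤ ∑ a', |π s' a' * (Q s' a' - Q' s' a')| := Finset.abs_sum_le_sum_abs _ _
      _ ≤ ∑ a', π s' a' * ε := by
          apply Finset.sum_le_sum; intro a' _
          rw [abs_mul, abs_of_nonneg (hπ0 _ _)]
          exact mul_le_mul_of_nonneg_left (hp₀ (s', a')) (hπ0 _ _)
      _ = ε := by rw [← Finset.sum_mul, hπ1, one_mul]
  have hεbound : ε ≤ Rmax / (1 - γ) * D := by
    have hstep : ε ≤ γ * (Rmax * D + ε) := by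
      have h1 : ε = γ * |(∑ s', (P p₀.1 p₀.2 s' - P' p₀.1 p₀.2 s') * V' s') +
          ∑ s', P p₀.1 p₀.2 s' * (V s' - V' s')| := by
        rw [hεdef, key, abs_mul, abs_of_nonneg hγ0]
      rw [show γ * (Rmax * D + ε) = γ * (Rmax * D + ε) from rfl]
      refine h1.le.trans ?_
      refine mul_le_mul_of_nonneg_left ?_ hγ0
      refine (abs_add_le _ _).trans (add_le_add ?_ ?_)
      · calc |∑ s', (P p₀.1 p₀.2 s' - P' p₀.1 p₀.2 s') * V' s'|
            ≤ ∑ s', |(P p₀.1 p₀.2 s' - P' p₀.1 p₀.2 s') * V' s'| :=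
              Finset.abs_sum_le_sum_abs _ _
          _ ≤ ∑ s', |P p₀.1 p₀.2 s' - P' p₀.1 p₀.2 s'| * Rmax := by
              apply Finset.sum_le_sum; intro s' _
              rw [abs_mul]
              exact mul_le_mul_of_nonneg_left (hVbd s' |>.trans hM) (abs_nonneg _)
          _ = (∑ s', |P p₀.1 p₀.2 s' - P' p₀.1 p₀.2 s'|) * Rmax := by
              rw [Finset.sum_mul]
          _ ≤ Rmax * D := by
              rw [mul_comm]
              exact mul_le_mul_of_nonneg_left (hTVle p₀) hRmax
      · calc |∑ s', P p₀.1 p₀.2 s' * (V s' - V' s')|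
            ≤ ∑ s', |P p₀.1 p₀.2 s' * (V s' - V' s')| := Finset.abs_sum_le_sum_abs _ _
          _ ≤ ∑ s', P p₀.1 p₀.2 s' * ε := by
              apply Finset.sum_le_sum; intro s' _
              rw [abs_mul, abs_of_nonneg (hP0 _ _ _)]
              exact mul_le_mul_of_nonneg_left (hVgap s') (hP0 _ _ _)
          _ = ε := by rw [← Finset.sum_mul, hP1, one_mul]
    rw [div_mul_eq_mul_div, le_div_iff₀ h1γ]
    nlinarith [mul_nonneg (le_of_lt h1γ) (mul_nonneg hRmax hD0)]
  exact ciSup_le fun p => (hp₀ p).trans hεbound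
end

section
/- Let Q^π be the action-value function of policy π in a finite discounted MDP, and let ε(s,a) = Q^π_M(s,a) − Q^π_B(s,a) denote the difference of Q-functions of the same policy under two transition kernels P_M and P_B. Then ε satisfies the fixed-point identity ε(s,a) = Σ_{s'} (P_M(s'|s,a) − P_B(s'|s,a)) (r(s,a) + γ V^π_B(s')) + γ Σ_{s'} P_M(s'|s,a) Σ_{a'} π(a'|s') ε(s',a'). -/
open Finset

/-- Fixed-point identity for the difference of Q-functions of the same policy
under two transition kernels (Lemma 1 of Fujimoto et al.). -/
theorem q_difference_fixed_point {S A : Type*} [Fintype S] [Fintype A]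
    (PM PB : S → A → S → ℝ)
    (hPM0 : ∀ s a s', 0 ≤ PM s a s') (hPM1 : ∀ s a, ∑ s', PM s a s' = 1)
    (hPB0 : ∀ s a s', 0 ≤ PB s a s') (hPB1 : ∀ s a, ∑ s', PB s a s' = 1)
    (r : S → A → ℝ) (γ : ℝ) (hγ0 : 0 ≤ γ) (hγ1 : γ < 1)
    (π : S → A → ℝ) (hπ0 : ∀ s a, 0 ≤ π s a) (hπ1 : ∀ s, ∑ a, π s a = 1)
    (QM QB : S → A → ℝ) (VB : S → ℝ)
    (hVB : ∀ s, VB s = ∑ a, π s a * QB s a)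
    (hBellM : ∀ s a, QM s a = r s a + γ * ∑ s', PM s a s' * ∑ a', π s' a' * QM s' a')
    (hBellB : ∀ s a, QB s a = r s a + γ * ∑ s', PB s a s' * VB s')
    (ε : S → A → ℝ) (hε : ∀ s a, ε s a = QM s a - QB s a) :
    ∀ s a, ε s a =
      (∑ s', (PM s a s' - PB s a s') * (r s a + γ * VB s')) +
        γ * ∑ s', PM s a s' * ∑ a', π s' a' * ε s' a' := by
  intro s a
  have hεsum : ∀ s', ∑ a', π s' a' * ε s' a'
      = (∑ a', π s' a' * QM s' a') - VB s' := by
    intro s'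
    rw [hVB, ← Finset.sum_sub_distrib]
    exact Finset.sum_congr rfl fun a' _ => by rw [hε]; ring
  have h2 : ∑ s', PM s a s' * ∑ a', π s' a' * ε s' a'
      = (∑ s', PM s a s' * ∑ a', π s' a' * QM s' a')
        - ∑ s', PM s a s' * VB s' := by
    rw [← Finset.sum_sub_distrib]
    exact Finset.sum_congr rfl fun s' _ => by rw [hεsum]; ring
  have h1 : ∑ s', (PM s a s' - PB s a s') * (r s a + γ * VB s')
      = γ * (∑ s', PM s a s' * VB s') - γ * ∑ s', PB s a s' * VB s' := by
    have := hPM1 s a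
    have := hPB1 s a
    simp only [sub_mul, mul_add, Finset.sum_sub_distrib, Finset.sum_add_distrib,
      ← Finset.sum_mul, Finset.mul_sum]
    rw [hPM1 s a, hPB1 s a]
    ring_nf
    simp only [mul_comm, mul_left_comm, mul_assoc]
    ring
  rw [hε, hBellM, hBellB, h1, h2]
  ring
end
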